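/- For the second-order generator approximation with coefficients determined by a₀ = −3/2, a₁ = 2, a₂ = −1/2 (i.e., the solution of Σ a_j j^k = δ_{k,1} for k = 0,1,2), and constants c₁ = 4/(2βη+3), c₂ = −1/(2βη+3) where β, η > 0 satisfy βη < 1/3, define the sequence d_j by d_0 = 1, d_{−1} = 0, and d_j = c₁ d_{j−1} + c₂ d_{j−2} for j ≥ 1. Then |d_j| ≤ 12 (1/(1+βη)^j + 1/2^j) for all j ≥ 0. -/

import Mathlib

set_option maxHeartbeats 1600000 in
/-- stability of the second-order backward-difference recursion.
With `c₁ = 4/(2βη+3)`, `c₂ = −1/(2βη+3)`, `βη < 1/3`, the sequence `d_0 = 1`,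
`d_{-1} = 0`, `d_j = c₁ d_{j−1} + c₂ d_{j−2}` satisfies
`|d_j| ≤ 12 (1/(1+βη)^j + 1/2^j)` for all `j ≥ 0`. -/
theorem stmt8 (β η : ℝ) (hβ : 0 < β) (hη : 0 < η) (h : β * η < 1 / 3)
    (d : ℕ → ℝ) (h0 : d 0 = 1)
    (h1 : d 1 = (4 / (2 * β * η + 3)) * d 0)
    (hrec : ∀ j : ℕ,
      d (j + 2) = (4 / (2 * β * η + 3)) * d (j + 1) + (-(1 / (2 * β * η + 3))) * d j) :
    ∀ j : ℕ, |d j| ≤ 12 * (1 / (1 + β * η) ^ j + 1 / 2 ^ j) := by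
  have ht0 : 0 < β * η := mul_pos hβ hη
  set t : ℝ := β * η with ht
  have ht3 : t < 1 / 3 := h
  have h12t : (0:ℝ) < 1 - 2 * t := by linarith
  set q : ℝ := Real.sqrt (1 - 2 * t) with hqdef
  have hq2 : q ^ 2 = 1 - 2 * t := Real.sq_sqrt h12t.le
  have hqpos : 0 < q := Real.sqrt_pos.mpr h12t
  have hq1 : q < 1 := by nlinarith [hq2, hqpos]
  have hqlb : 2 / 23 < q := by nlinarith [hq2, hqpos]
  have hs : (0:ℝ) < 2 * t + 3 := by linarith
  have hsne : (2 * t + 3) ≠ 0 := ne_of_gt hs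
  set r₁ : ℝ := (2 + q) / (2 * t + 3) with hr1
  set r₂ : ℝ := (2 - q) / (2 * t + 3) with hr2
  have hr1pos : 0 < r₁ := div_pos (by linarith) hs
  have hr2pos : 0 < r₂ := div_pos (by linarith) hs
  have hr2ler1 : r₂ ≤ r₁ := by
    rw [hr1, hr2]; gcongr; linarith
  have hdiff : r₁ - r₂ = 2 * q / (2 * t + 3) := by
    rw [hr1, hr2]; ring
  have hdiffpos : 0 < r₁ - r₂ := by
    rw [hdiff]; positivity
  have h23 : (2 * β * η + 3) = 2 * t + 3 := by rw [ht]; ring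
  have hsum : r₁ + r₂ = 4 / (2 * t + 3) := by
    rw [hr1, hr2]; field_simp; ring
  have e1 : r₁ ^ 2 = (4 / (2 * t + 3)) * r₁ - 1 / (2 * t + 3) := by
    rw [hr1]; field_simp; linear_combination hq2
  have e2 : r₂ ^ 2 = (4 / (2 * t + 3)) * r₂ - 1 / (2 * t + 3) := by
    rw [hr2]; field_simp; linear_combination hq2
  -- closed form (multiplied through by r₁ - r₂)
  have key : ∀ j : ℕ, d j * (r₁ - r₂) = r₁ ^ (j + 1) - r₂ ^ (j + 1) ∧
      d (j + 1) * (r₁ - r₂) = r₁ ^ (j + 2) - r₂ ^ (j + 2) := by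
    intro j
    induction j with
    | zero =>
      constructor
      · rw [h0]; ring
      · rw [h1, h0, h23]
        linear_combination (r₁ - r₂) * hsum
    | succ n ih =>
      refine ⟨ih.2, ?_⟩
      rw [hrec n, h23]
      linear_combination (4 / (2 * t + 3)) * ih.2 - (1 / (2 * t + 3)) * ih.1
        - r₁ ^ (n + 1) * e1 + r₂ ^ (n + 1) * e2
  have hr1le : r₁ ≤ 1 / (1 + t) := by
    rw [hr1, div_le_div_iff₀ hs (by linarith)]
    nlinarith [hq2, hqpos, ht0]
  intro j
  obtain ⟨hd, -⟩ := key j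
  have hpow : r₂ ^ (j + 1) ≤ r₁ ^ (j + 1) := pow_le_pow_left₀ hr2pos.le hr2ler1 _
  have hd' : d j = (r₁ ^ (j + 1) - r₂ ^ (j + 1)) / (r₁ - r₂) := by
    field_simp [ne_of_gt hdiffpos]; linarith [hd]
  have hd0 : 0 ≤ d j := by
    rw [hd']; exact div_nonneg (by linarith) hdiffpos.le
  rw [abs_of_nonneg hd0, hd']
  have step1 : (r₁ ^ (j + 1) - r₂ ^ (j + 1)) / (r₁ - r₂) ≤ r₁ ^ (j + 1) / (r₁ - r₂) := by
    gcongr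
    nlinarith [pow_nonneg hr2pos.le (j + 1)]
  have step2 : r₁ ^ (j + 1) / (r₁ - r₂) = r₁ ^ j * (r₁ / (r₁ - r₂)) := by
    rw [pow_succ]; ring
  have step3 : r₁ / (r₁ - r₂) ≤ 12 := by
    rw [div_le_iff₀ hdiffpos, hdiff, hr1]
    have h24 : 12 * (2 * q / (2 * t + 3)) = 24 * q / (2 * t + 3) := by ring
    rw [h24, div_le_div_iff₀ hs hs]
    nlinarith [hqlb, hs]
  have step4 : r₁ ^ j ≤ (1 / (1 + t)) ^ j := pow_le_pow_left₀ hr1pos.le hr1le j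
  have hfinal : (r₁ ^ (j + 1) - r₂ ^ (j + 1)) / (r₁ - r₂) ≤ 12 * (1 / (1 + t)) ^ j := by
    calc (r₁ ^ (j + 1) - r₂ ^ (j + 1)) / (r₁ - r₂) ≤ r₁ ^ (j + 1) / (r₁ - r₂) := step1
      _ = r₁ ^ j * (r₁ / (r₁ - r₂)) := step2
      _ ≤ (1 / (1 + t)) ^ j * 12 := by
          apply mul_le_mul step4 step3 (by positivity) (by positivity)
      _ = 12 * (1 / (1 + t)) ^ j := by ring
  have hpos2 : (0:ℝ) < 1 / 2 ^ j := by positivity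
  have : (1 / (1 + t)) ^ j = 1 / (1 + t) ^ j := by rw [one_div_pow]
  rw [this] at hfinal
  linarith
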